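/- Let A be an arrangement of d lines that is nontrivial (not all lines pass through a common point). Then the total number of intersection points satisfies Σ_{m≥2} t_m ≥ d. -/

import Mathlib

open scoped BigOperators

/-- Points and lines of the projective plane over `k` (lines via duality). -/
abbrev ProjPlane (k : Type*) [Field k] := Projectivization k (Fin 3 → k)

/-- Incidence between a point `p` and a line `L` (given by its dual coefficients):
all representatives pair to zero under the standard bilinear form. -/
def Incid {k : Type*} [Field k] (p L : ProjPlane k) : Prop :=
  ∀ v ∈ p.submodule, ∀ w ∈ L.submodule, ∑ i, v i * w i = 0

/-- Number of lines of the arrangement `A` passing through the point `p`. -/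
noncomputable def linesThrough {k : Type*} [Field k]
    (A : Finset (ProjPlane k)) (p : ProjPlane k) : ℕ :=
  {L : ProjPlane k | L ∈ A ∧ Incid p L}.ncard

/-- `tm A m` is the number of `m`-points of the arrangement `A`. -/
noncomputable def tm {k : Type*} [Field k]
    (A : Finset (ProjPlane k)) (m : ℕ) : ℕ :=
  {p : ProjPlane k | linesThrough A p = m}.ncard

/-- The arrangement is trivial if all its lines pass through a common point. -/
def IsTrivial {k : Type*} [Field k] (A : Finset (ProjPlane k)) : Prop :=
  ∃ p : ProjPlane k, ∀ L ∈ A, Incid p L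

/-- First Chern number of a line arrangement. -/
noncomputable def c1sq {k : Type*} [Field k] (A : Finset (ProjPlane k)) : ℤ :=
  9 - 5 * (A.card : ℤ) +
    ∑ m ∈ Finset.Icc 2 A.card, (3 * (m : ℤ) - 4) * (tm A m : ℤ)

/-- Second Chern number of a line arrangement. -/
noncomputable def c2 {k : Type*} [Field k] (A : Finset (ProjPlane k)) : ℤ :=
  3 - 2 * (A.card : ℤ) +
    ∑ m ∈ Finset.Icc 2 A.card, ((m : ℤ) - 1) * (tm A m : ℤ)

namespace DBE

variable {k : Type*} [Field k]

lemma incid_mk_iff (w : Fin 3 → k) (hw : w ≠ 0) (L : ProjPlane k) :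
    Incid (Projectivization.mk k w hw) L ↔ ∑ i, w i * L.rep i = 0 := by
  constructor
  · intro h
    exact h w (by rw [Projectivization.submodule_mk]; exact Submodule.mem_span_singleton_self w)
      L.rep (by rw [Projectivization.submodule_eq]; exact Submodule.mem_span_singleton_self _)
  · intro h v hv u hu
    rw [Projectivization.submodule_mk, Submodule.mem_span_singleton] at hv
    rw [Projectivization.submodule_eq, Submodule.mem_span_singleton] at hu
    obtain ⟨a, rfl⟩ := hv
    obtain ⟨b, rfl⟩ := hu
    have : ∑ i, (a • w) i * (b • L.rep) i = (a * b) * ∑ i, w i * L.rep i := by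
      rw [Finset.mul_sum]; apply Finset.sum_congr rfl; intro i _
      simp [Pi.smul_apply, smul_eq_mul]; ring
    rw [this, h, mul_zero]

lemma incid_iff (p L : ProjPlane k) :
    Incid p L ↔ ∑ i, p.rep i * L.rep i = 0 := by
  conv_lhs => rw [← p.mk_rep]
  exact incid_mk_iff p.rep p.rep_nonzero L

lemma incid_symm {p L : ProjPlane k} (h : Incid p L) : Incid L p := by
  rw [incid_iff] at h ⊢
  rw [← h]; apply Finset.sum_congr rfl; intros; ring

lemma indep_of_ne {p q : ProjPlane k} (h : p ≠ q) :
    LinearIndependent k ![p.rep, q.rep] := by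
  rw [linearIndependent_fin2]
  refine ⟨by simpa using q.rep_nonzero, fun a ha => ?_⟩
  simp only [Matrix.cons_val_one, Matrix.head_cons, Matrix.cons_val_zero] at ha
  apply h
  rw [← p.mk_rep, ← q.mk_rep]
  exact (Projectivization.mk_eq_mk_iff' k _ _ p.rep_nonzero q.rep_nonzero).2 ⟨a, ha⟩

lemma toDual_basisFun_apply (v w : Fin 3 → k) :
    (Pi.basisFun k (Fin 3)).toDual v w = ∑ i, v i * w i := by
  set b := Pi.basisFun k (Fin 3)
  have hw : w = ∑ i, w i • b i := by
    funext j; simp [b, Pi.basisFun_apply, Finset.sum_apply, Pi.single_apply]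
  conv_lhs => rw [hw]
  rw [map_sum]
  apply Finset.sum_congr rfl
  intro i _
  rw [map_smul, Module.Basis.toDual_apply_left, Pi.basisFun_repr, smul_eq_mul, mul_comm]

lemma solspace (v₁ v₂ : Fin 3 → k) (h : LinearIndependent k ![v₁, v₂]) :
    ∃ W : Submodule k (Fin 3 → k), Module.finrank k W = 1 ∧
      ∀ w, w ∈ W ↔ ((∑ i, v₁ i * w i = 0) ∧ (∑ i, v₂ i * w i = 0)) := by
  classical
  set b := Pi.basisFun k (Fin 3)
  set e := b.toDualEquiv
  have hind : LinearIndependent k ![e v₁, e v₂] := by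
    have := h.map' e.toLinearMap e.ker
    convert this using 1
    funext i
    fin_cases i <;> rfl
    all_goals rfl
  set Φ : Submodule k (Module.Dual k (Fin 3 → k)) := Submodule.span k (Set.range ![e v₁, e v₂])
  have hΦ : Module.finrank k Φ = 2 := by
    rw [finrank_span_eq_card hind]; simp
  refine ⟨Φ.dualCoannihilator, ?_, ?_⟩
  · have := Subspace.finrank_add_finrank_dualCoannihilator_eq Φ
    have hV : Module.finrank k (Fin 3 → k) = 3 := by simp
    omega
  · intro w
    rw [Submodule.mem_dualCoannihilator]
    constructor
    · intro hw
      have h1 : e v₁ ∈ Φ := Submodule.subset_span ⟨0, rfl⟩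
      have h2 : e v₂ ∈ Φ := Submodule.subset_span ⟨1, rfl⟩
      constructor
      · rw [← toDual_basisFun_apply]; exact hw _ h1
      · rw [← toDual_basisFun_apply]; exact hw _ h2
    · rintro ⟨h1, h2⟩ φ hφ
      induction hφ using Submodule.span_induction with
      | mem x hx =>
        obtain ⟨i, rfl⟩ := hx
        fin_cases i
        · show e v₁ w = 0
          rw [show (e v₁ : Module.Dual k (Fin 3 → k)) w = b.toDual v₁ w from rfl,
            toDual_basisFun_apply]; exact h1
        · show e v₂ w = 0
          rw [show (e v₂ : Module.Dual k (Fin 3 → k)) w = b.toDual v₂ w from rfl,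
            toDual_basisFun_apply]; exact h2
      | zero => rfl
      | add x y _ _ hx hy => simp [LinearMap.add_apply, hx, hy]
      | smul a x _ hx => simp [LinearMap.smul_apply, hx]

lemma exists_meet {L₁ L₂ : ProjPlane k} (h : L₁ ≠ L₂) :
    ∃ p : ProjPlane k, Incid p L₁ ∧ Incid p L₂ := by
  obtain ⟨W, hW1, hWmem⟩ := solspace L₁.rep L₂.rep (indep_of_ne h)
  have hWne : W ≠ ⊥ := by
    intro hbot
    rw [hbot] at hW1
    simp at hW1
  obtain ⟨w, hwW, hw⟩ := Submodule.exists_mem_ne_zero_of_ne_bot hWne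
  obtain ⟨h1, h2⟩ := (hWmem w).1 hwW
  refine ⟨Projectivization.mk k w hw, ?_, ?_⟩
  · rw [incid_mk_iff]; rw [← h1]; apply Finset.sum_congr rfl; intros; ring
  · rw [incid_mk_iff]; rw [← h2]; apply Finset.sum_congr rfl; intros; ring

lemma unique_point {L₁ L₂ p q : ProjPlane k} (h : L₁ ≠ L₂)
    (h1 : Incid p L₁) (h2 : Incid p L₂) (h3 : Incid q L₁) (h4 : Incid q L₂) :
    p = q := by
  obtain ⟨W, hW1, hWmem⟩ := solspace L₁.rep L₂.rep (indep_of_ne h)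
  have hp : p.rep ∈ W := by
    rw [hWmem]
    rw [incid_iff] at h1 h2
    constructor
    · rw [← h1]; apply Finset.sum_congr rfl; intros; ring
    · rw [← h2]; apply Finset.sum_congr rfl; intros; ring
  have hq : q.rep ∈ W := by
    rw [hWmem]
    rw [incid_iff] at h3 h4
    constructor
    · rw [← h3]; apply Finset.sum_congr rfl; intros; ring
    · rw [← h4]; apply Finset.sum_congr rfl; intros; ring
  have hspan : Submodule.span k {p.rep} = W := by
    apply Submodule.eq_of_le_of_finrank_eq
    · rw [Submodule.span_le, Set.singleton_subset_iff]; exact hp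
    · rw [finrank_span_singleton p.rep_nonzero, hW1]
  have : q.rep ∈ Submodule.span k {p.rep} := hspan ▸ hq
  rw [Submodule.mem_span_singleton] at this
  obtain ⟨a, ha⟩ := this
  rw [← p.mk_rep, ← q.mk_rep]
  exact ((Projectivization.mk_eq_mk_iff' k _ _ q.rep_nonzero p.rep_nonzero).2 ⟨a, ha⟩).symm

lemma unique_line {L₁ L₂ p q : ProjPlane k} (h : p ≠ q)
    (h1 : Incid p L₁) (h2 : Incid p L₂) (h3 : Incid q L₁) (h4 : Incid q L₂) :
    L₁ = L₂ :=
  unique_point h (incid_symm h1) (incid_symm h3) (incid_symm h2) (incid_symm h4)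

lemma finite_through (A : Finset (ProjPlane k)) (p : ProjPlane k) :
    {L : ProjPlane k | L ∈ A ∧ Incid p L}.Finite :=
  A.finite_toSet.subset fun _ hL => hL.1

lemma linesThrough_le (A : Finset (ProjPlane k)) (p : ProjPlane k) :
    linesThrough A p ≤ A.card := by
  rw [linesThrough, ← Set.ncard_coe_finset]
  exact Set.ncard_le_ncard (fun _ hL => hL.1) A.finite_toSet

lemma two_le_linesThrough_iff (A : Finset (ProjPlane k)) (p : ProjPlane k) :
    2 ≤ linesThrough A p ↔
      ∃ L₁, (L₁ ∈ A ∧ Incid p L₁) ∧ ∃ L₂, (L₂ ∈ A ∧ Incid p L₂) ∧ L₁ ≠ L₂ := by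
  rw [show (2 ≤ linesThrough A p) ↔ (1 < linesThrough A p) from Iff.rfl, linesThrough,
    Set.one_lt_ncard (finite_through A p)]
  simp only [Set.mem_setOf_eq, exists_prop]

end DBE

/-- de Bruijn–Erdős: a nontrivial arrangement of `d` lines has at least `d`
intersection points: `Σ_{m ≥ 2} t_m ≥ d`. -/
theorem stmt_1 {k : Type*} [Field k] (A : Finset (ProjPlane k))
    (hd : 2 ≤ A.card) (hnt : ¬ IsTrivial A) :
    A.card ≤ ∑ m ∈ Finset.Icc 2 A.card, tm A m := by
  classical
  have hnt' : ∀ p : ProjPlane k, ∃ L ∈ A, ¬ Incid p L := by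
    intro p
    by_contra hc
    push_neg at hc
    exact hnt ⟨p, hc⟩
  set S : Set (ProjPlane k) := {p : ProjPlane k | 2 ≤ linesThrough A p} with hSdef
  -- membership in S from two incident distinct lines
  have hmemS : ∀ {L₁ L₂ : ProjPlane k} {p : ProjPlane k}, L₁ ∈ A → L₂ ∈ A → L₁ ≠ L₂ →
      Incid p L₁ → Incid p L₂ → p ∈ S := by
    intro L₁ L₂ p hA1 hA2 hne h1 h2
    exact (DBE.two_le_linesThrough_iff A p).2 ⟨L₁, ⟨hA1, h1⟩, L₂, ⟨hA2, h2⟩, hne⟩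
  have hSfin : S.Finite := by
    have hsub : S ⊆ ⋃ L₁ ∈ A, ⋃ L₂ ∈ A,
        {p : ProjPlane k | L₁ ≠ L₂ ∧ Incid p L₁ ∧ Incid p L₂} := by
      intro p hp
      obtain ⟨L₁, ⟨hA1, h1⟩, L₂, ⟨hA2, h2⟩, hne⟩ := (DBE.two_le_linesThrough_iff A p).1 hp
      simp only [Set.mem_iUnion]
      exact ⟨L₁, hA1, L₂, hA2, hne, h1, h2⟩
    refine Set.Finite.subset ?_ hsub
    refine Set.Finite.biUnion A.finite_toSet fun L₁ _ =>
      Set.Finite.biUnion A.finite_toSet fun L₂ _ => ?_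
    apply Set.Subsingleton.finite
    rintro p ⟨hne, hp1, hp2⟩ q ⟨_, hq1, hq2⟩
    exact DBE.unique_point hne hp1 hp2 hq1 hq2
  haveI : Fintype ↥S := hSfin.fintype
  letI : Membership {L : ProjPlane k // L ∈ A} {p : ProjPlane k // p ∈ S} :=
    ⟨fun l pt => Incid l.val pt.val⟩
  haveI : Configuration.HasLines {L : ProjPlane k // L ∈ A} {p : ProjPlane k // p ∈ S} := by
    refine
      { exists_point := ?_
        exists_line := ?_
        eq_or_eq := ?_
        mkLine := fun {M₁ M₂} h =>
          ⟨(DBE.exists_meet (fun e => h (Subtype.ext e))).choose,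
            hmemS M₁.2 M₂.2 (fun e => h (Subtype.ext e))
              (DBE.exists_meet (fun e => h (Subtype.ext e))).choose_spec.1
              (DBE.exists_meet (fun e => h (Subtype.ext e))).choose_spec.2⟩
        mkLine_ax := fun {M₁ M₂} h =>
          ⟨(DBE.exists_meet (fun e => h (Subtype.ext e))).choose_spec.1,
            (DBE.exists_meet (fun e => h (Subtype.ext e))).choose_spec.2⟩ }
    · -- exists_point : for every intersection point, a line of A not through it
      rintro ⟨p, hp⟩
      obtain ⟨L, hLA, hL⟩ := hnt' p
      exact ⟨⟨L, hLA⟩, hL⟩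
    · -- exists_line : for every line of A, an intersection point not on it
      rintro ⟨L, hLA⟩
      obtain ⟨L', hL'A, hL'ne⟩ := Finset.exists_mem_ne (lt_of_lt_of_le one_lt_two hd) L
      obtain ⟨p₀, hp₀1, hp₀2⟩ := DBE.exists_meet hL'ne
      obtain ⟨L'', hL''A, hL''⟩ := hnt' p₀
      have hne2 : L' ≠ L'' := fun e => hL'' (e ▸ hp₀1)
      obtain ⟨q, hq1, hq2⟩ := DBE.exists_meet hne2
      refine ⟨⟨q, hmemS hL'A hL''A hne2 hq1 hq2⟩, ?_⟩
      intro hq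
      by_cases hqp : q = p₀
      · exact hL'' (hqp ▸ hq2)
      · exact hL'ne (DBE.unique_line hqp hq1 hq hp₀1 hp₀2)
    · -- eq_or_eq
      rintro ⟨M₁, hM₁⟩ ⟨M₂, hM₂⟩ ⟨q₁, hq₁⟩ ⟨q₂, hq₂⟩ h1 h2 h3 h4
      by_cases hM : M₁ = M₂
      · exact Or.inl (Subtype.ext hM)
      · exact Or.inr (Subtype.ext (DBE.unique_point hM h1 h2 h3 h4))
  have hcard := Configuration.HasLines.card_le
    (P := {L : ProjPlane k // L ∈ A}) (L := {p : ProjPlane k // p ∈ S})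
  rw [Fintype.card_coe] at hcard
  have hcardS : Fintype.card {p : ProjPlane k // p ∈ S} = S.ncard := by
    rw [← Nat.card_coe_set_eq, Nat.card_eq_fintype_card]
  rw [hcardS] at hcard
  refine le_trans hcard (le_of_eq ?_)
  -- S.ncard = ∑ tm
  set T : Finset (ProjPlane k) := hSfin.toFinset with hTdef
  have hTcard : S.ncard = T.card := Set.ncard_eq_toFinset_card S hSfin
  have hfib : T.card = ∑ m ∈ Finset.Icc 2 A.card,
      (T.filter fun p => linesThrough A p = m).card := by
    apply Finset.card_eq_sum_card_fiberwise
    intro p hp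
    rw [Finset.mem_coe, hTdef, Set.Finite.mem_toFinset] at hp
    rw [Finset.mem_coe, Finset.mem_Icc]
    exact ⟨hp, DBE.linesThrough_le A p⟩
  rw [hTcard, hfib]
  apply Finset.sum_congr rfl
  intro m hm
  rw [Finset.mem_Icc] at hm
  have hset : {p : ProjPlane k | linesThrough A p = m} =
      ↑(T.filter fun p => linesThrough A p = m) := by
    ext p
    simp only [Set.mem_setOf_eq, Finset.coe_filter, Set.mem_setOf_eq, Finset.mem_coe,
      Finset.mem_filter, hTdef, Set.Finite.mem_toFinset]
    constructor
    · intro h; exact ⟨by rw [hSdef]; simpa [h] using hm.1, h⟩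
    · exact fun h => h.2
  rw [tm, hset, Set.ncard_coe_finset]
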